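/- The series of H(k)^2/(k+1)^2 over positive integers k converges to (11/4)ζ(4). -/

import Mathlib

open scoped BigOperators

/-- The harmonic number `H k = ∑_{j=1}^k 1/j`. -/
noncomputable def H (k : ℕ) : ℝ := ∑ j ∈ Finset.Icc 1 k, (1 : ℝ) / j

/-- The generalized harmonic number `H^{(p)} k = ∑_{j=1}^k 1/j^p`. -/
noncomputable def Hgen (p k : ℕ) : ℝ := ∑ j ∈ Finset.Icc 1 k, (1 : ℝ) / (j : ℝ) ^ p

open Real Filter Finset
open scoped ENNReal NNReal

noncomputable def Z2 : ℝ := π ^ 2 / 6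
noncomputable def Z4 : ℝ := π ^ 4 / 90

lemma H_zero : H 0 = 0 := by simp [H]

lemma H_succ (n : ℕ) : H (n + 1) = H n + 1 / (n + 1) := by
  rw [H, H, Finset.sum_Icc_succ_top (by omega)]
  push_cast; ring

lemma Hgen_zero (p : ℕ) : Hgen p 0 = 0 := by simp [Hgen]

lemma Hgen_succ (p n : ℕ) : Hgen p (n + 1) = Hgen p n + 1 / ((n : ℝ) + 1) ^ p := by
  rw [Hgen, Hgen, Finset.sum_Icc_succ_top (by omega)]
  push_cast; ring

lemma H_nonneg (k : ℕ) : 0 ≤ H k := by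
  apply Finset.sum_nonneg; intro i _; positivity

lemma Hgen_nonneg (p k : ℕ) : 0 ≤ Hgen p k := by
  apply Finset.sum_nonneg; intro i _; positivity

lemma H_range (k : ℕ) : ∑ j ∈ Finset.range k, (1 : ℝ) / (j + 1) = H k := by
  induction k with
  | zero => simp [H_zero]
  | succ n ih => rw [Finset.sum_range_succ, ih, H_succ]

lemma Hgen2_range (k : ℕ) : ∑ j ∈ Finset.range k, (1 : ℝ) / ((j : ℝ) + 1) ^ 2 = Hgen 2 k := by
  induction k with
  | zero => simp [Hgen_zero]
  | succ n ih => rw [Finset.sum_range_succ, ih, Hgen_succ]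

lemma hq2 : HasSum (fun n : ℕ => (1 : ℝ) / ((n : ℝ) + 1) ^ 2) Z2 := by
  have h := hasSum_zeta_two
  rw [← hasSum_nat_add_iff' 1] at h
  simpa [Z2] using h

lemma hq4 : HasSum (fun n : ℕ => (1 : ℝ) / ((n : ℝ) + 1) ^ 4) Z4 := by
  have h := hasSum_zeta_four
  rw [← hasSum_nat_add_iff' 1] at h
  simpa [Z4] using h

/-- Tail of `ζ(2)`. -/
lemma L_tail (m : ℕ) :
    HasSum (fun n : ℕ => (1 : ℝ) / ((m : ℝ) + n + 1) ^ 2) (Z2 - Hgen 2 m) := by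
  have h := hq2
  rw [← hasSum_nat_add_iff' m] at h
  have hs : ∑ i ∈ Finset.range m, (1 : ℝ) / ((i : ℝ) + 1) ^ 2 = Hgen 2 m := Hgen2_range m
  rw [hs] at h
  convert h using 2 with n
  · rfl
  push_cast; ring_nf

lemma tail_nonneg (m : ℕ) : 0 ≤ Z2 - Hgen 2 m := by
  have h := L_tail m
  have := h.tsum_eq
  rw [← this]
  exact tsum_nonneg (fun n => by positivity)

/-- Telescoping: `∑_n 1/((n+1)(n+m+2)) = H(m+1)/(m+1)`. -/
lemma L_tel (m : ℕ) :
    HasSum (fun n : ℕ => (1 : ℝ) / (((n : ℝ) + 1) * ((n : ℝ) + m + 2)))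
      (H (m + 1) * (1 / ((m : ℝ) + 1))) := by
  set F : ℕ → ℝ := fun N => ∑ j ∈ Finset.range (m + 1), (1 : ℝ) / ((N : ℝ) + j + 1) with hF
  have hdiff : ∀ n : ℕ, F n - F (n + 1) = ((m : ℝ) + 1) / (((n : ℝ) + 1) * ((n : ℝ) + m + 2)) := by
    intro n
    have e1 : F n = (∑ k ∈ Finset.range m, (1 : ℝ) / ((n : ℝ) + 1 + k + 1)) + 1 / ((n : ℝ) + 1) := by
      rw [hF]; simp only
      rw [Finset.sum_range_succ']
      congr 1
      · apply Finset.sum_congr rfl; intro k _; push_cast; ring_nf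
      · norm_num
    have e2 : F (n + 1) = (∑ k ∈ Finset.range m, (1 : ℝ) / ((n : ℝ) + 1 + k + 1)) + 1 / ((n : ℝ) + m + 2) := by
      rw [hF]; simp only
      rw [Finset.sum_range_succ]
      congr 1
      · apply Finset.sum_congr rfl; intro k _; push_cast; ring_nf
      · push_cast; ring_nf
    rw [e1, e2]
    have h1 : ((n : ℝ) + 1) ≠ 0 := by positivity
    have h2 : ((n : ℝ) + m + 2) ≠ 0 := by positivity
    field_simp
    ring
  have key : HasSum (fun n : ℕ => F n - F (n + 1)) (H (m + 1)) := by
    have hnn : ∀ n : ℕ, 0 ≤ F n - F (n + 1) := by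
      intro n; rw [hdiff n]; positivity
    rw [hasSum_iff_tendsto_nat_of_nonneg hnn]
    have hsum : ∀ N : ℕ, ∑ n ∈ Finset.range N, (F n - F (n + 1)) = F 0 - F N := by
      intro N; exact Finset.sum_range_sub' F N
    simp only [hsum]
    have hF0 : F 0 = H (m + 1) := by
      rw [hF]; simp only [Nat.cast_zero]
      rw [← H_range (m + 1)]
      apply Finset.sum_congr rfl; intro j _; norm_num
    have hFlim : Tendsto F atTop (nhds 0) := by
      have hub : ∀ N : ℕ, F N ≤ (m + 1 : ℝ) / ((N : ℝ) + 1) := by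
        intro N
        rw [hF]; simp only
        calc ∑ j ∈ Finset.range (m + 1), (1 : ℝ) / ((N : ℝ) + j + 1)
            ≤ ∑ _j ∈ Finset.range (m + 1), (1 : ℝ) / ((N : ℝ) + 1) := by
              apply Finset.sum_le_sum; intro j _
              apply div_le_div_of_nonneg_left one_pos.le (by positivity)
              have : (0:ℝ) ≤ j := Nat.cast_nonneg j
              linarith
          _ = (m + 1 : ℝ) / ((N : ℝ) + 1) := by
              rw [Finset.sum_const, Finset.card_range]; push_cast; ring
      have hlb : ∀ N : ℕ, 0 ≤ F N := by
        intro N; rw [hF]; apply Finset.sum_nonneg; intro j _; positivity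
      have h2 : Tendsto (fun N : ℕ => (m + 1 : ℝ) / ((N : ℝ) + 1)) atTop (nhds 0) := by
        apply Tendsto.div_atTop tendsto_const_nhds
        exact tendsto_atTop_add_const_right _ _ tendsto_natCast_atTop_atTop
      exact squeeze_zero hlb hub h2
    have h3 := (tendsto_const_nhds (x := F 0)).sub hFlim
    rw [sub_zero] at h3
    simpa [hF0] using h3
  have heq : (fun n : ℕ => (1 : ℝ) / (((n : ℝ) + 1) * ((n : ℝ) + m + 2)))
      = fun n : ℕ => (1 / ((m : ℝ) + 1)) * (F n - F (n + 1)) := by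
    funext n
    rw [hdiff n]
    have h1 : ((n : ℝ) + 1) * ((n : ℝ) + m + 2) ≠ 0 := by positivity
    field_simp
  rw [heq, show H (m + 1) * (1 / ((m : ℝ) + 1)) = (1 / ((m : ℝ) + 1)) * H (m + 1) by ring]
  exact key.mul_left _

/-- `H(n)² = Hgen 2 n + 2 ∑_{j<n} H(j)/(j+1)`. -/
lemma L4' (n : ℕ) : H n ^ 2 = Hgen 2 n + 2 * ∑ j ∈ Finset.range n, H j * (1 / ((j : ℝ) + 1)) := by
  induction n with
  | zero => simp [H_zero, Hgen_zero]
  | succ k ih =>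
    rw [Finset.sum_range_succ, H_succ, Hgen_succ]
    have : (H k + 1 / ((k : ℝ) + 1)) ^ 2
        = H k ^ 2 + 2 * (H k * (1 / ((k : ℝ) + 1))) + 1 / ((k : ℝ) + 1) ^ 2 := by
      field_simp; ring
    rw [this, ih]; ring

/-- Reflection partial fraction sum: `∑_{m<n+1} 1/((m+1)(n+1−m)) = 2 H(n+1)/(n+2)`. -/
lemma L5a (n : ℕ) :
    ∑ m ∈ Finset.range (n + 1), (1 : ℝ) / (((m : ℝ) + 1) * ((n : ℝ) + 1 - m)) =
      2 * H (n + 1) * (1 / ((n : ℝ) + 2)) := by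
  have key : ∀ m ∈ Finset.range (n + 1),
      (1 : ℝ) / (((m : ℝ) + 1) * ((n : ℝ) + 1 - m)) =
        (1 / ((n : ℝ) + 2)) * (1 / ((m : ℝ) + 1) + 1 / ((n : ℝ) + 1 - m)) := by
    intro m hm
    have hm' : (m : ℝ) ≤ n := by
      exact_mod_cast Nat.lt_succ_iff.mp (Finset.mem_range.mp hm)
    have h1 : ((m : ℝ) + 1) ≠ 0 := by positivity
    have h2 : ((n : ℝ) + 1 - m) > 0 := by linarith
    field_simp
    ring
  rw [Finset.sum_congr rfl key, ← Finset.mul_sum, Finset.sum_add_distrib]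
  have hrefl : ∑ m ∈ Finset.range (n + 1), (1 : ℝ) / ((n : ℝ) + 1 - m)
      = ∑ m ∈ Finset.range (n + 1), (1 : ℝ) / ((m : ℝ) + 1) := by
    rw [← Finset.sum_range_reflect]
    apply Finset.sum_congr rfl
    intro j hj
    have hj' : j ≤ n := Nat.lt_succ_iff.mp (Finset.mem_range.mp hj)
    have e1 : n + 1 - 1 - j = n - j := by omega
    rw [e1, Nat.cast_sub hj']
    ring_nf
  rw [hrefl, H_range]
  ring

/-- `∑_{m ≤ j} H(m+1)/(j−m+1) = H(j+2)² − Hgen 2 (j+2)`. -/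
lemma L5 (j : ℕ) :
    ∑ m ∈ Finset.range (j + 1), H (m + 1) * ((1 : ℝ) / ((j : ℝ) - m + 1)) =
      H (j + 2) ^ 2 - Hgen 2 (j + 2) := by
  induction j with
  | zero =>
    simp only [zero_add, Finset.sum_range_one, Nat.cast_zero]
    rw [show H 1 = 1 by rw [H_succ, H_zero]; norm_num]
    rw [show H 2 = 3/2 by rw [H_succ, H_succ, H_zero]; norm_num]
    rw [show Hgen 2 2 = 5/4 by rw [Hgen_succ, Hgen_succ, Hgen_zero]; norm_num]
    norm_num
  | succ k ih =>
    -- LHS(k+1) = LHS(k) + ∑_{m<k+2} 1/((m+1)(k+2-m))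
    have step : ∑ m ∈ Finset.range (k + 2), H (m + 1) * ((1 : ℝ) / ((k : ℝ) + 1 - m + 1)) =
        (∑ m ∈ Finset.range (k + 1), H (m + 1) * ((1 : ℝ) / ((k : ℝ) - m + 1)))
        + ∑ m ∈ Finset.range (k + 2), (1 : ℝ) / (((m : ℝ) + 1) * ((k : ℝ) + 2 - m)) := by
      have expand : ∀ m ∈ Finset.range (k + 2),
          H (m + 1) * ((1 : ℝ) / ((k : ℝ) + 1 - m + 1)) =
            H m * ((1 : ℝ) / ((k : ℝ) + 1 - m + 1))
            + (1 : ℝ) / (((m : ℝ) + 1) * ((k : ℝ) + 2 - m)) := by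
        intro m hm
        rw [H_succ]
        have hm' : (m : ℝ) ≤ k + 1 := by
          exact_mod_cast Nat.lt_succ_iff.mp (Finset.mem_range.mp hm)
        have h2 : ((k : ℝ) + 2 - m) > 0 := by linarith
        have h1 : ((m : ℝ) + 1) ≠ 0 := by positivity
        have e : (k : ℝ) + 1 - m + 1 = (k : ℝ) + 2 - m := by ring
        rw [e]
        field_simp
      rw [Finset.sum_congr rfl expand, Finset.sum_add_distrib]
      congr 1
      -- ∑_{m<k+2} H m /(k+2-m) = ∑_{m<k+1} H(m+1)/(k+1-m)  (shift, H 0 = 0)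
      rw [Finset.sum_range_succ']
      simp only [H_zero, zero_mul, add_zero]
      apply Finset.sum_congr rfl
      intro m _
      push_cast
      ring_nf
    push_cast at step ⊢
    rw [step]
    have hL5a := L5a (k + 1)
    push_cast at hL5a
    simp only [show ((k:ℝ)+1+1) = (k:ℝ)+2 by ring, show ((k:ℝ)+1+2) = (k:ℝ)+3 by ring,
      show (k:ℕ)+1+1 = k+2 by ring] at hL5a
    rw [ih, hL5a]
    have e2 : k + 1 + 2 = (k + 2) + 1 := by omega
    rw [e2, H_succ (k+2), Hgen_succ 2 (k+2)]
    have h3 : ((k : ℝ) + 2) ≠ 0 := by positivity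
    have h4 : ((k : ℝ) + 3) ≠ 0 := by positivity
    push_cast
    field_simp
    ring

lemma H_eq_harmonic (k : ℕ) : H k = (harmonic k : ℝ) := by
  rw [H, harmonic_eq_sum_Icc]
  push_cast
  apply Finset.sum_congr rfl
  intro j _
  rw [one_div]

lemma H_le (m : ℕ) : H (m + 1) ≤ 5 * ((m : ℝ) + 1) ^ ((1:ℝ)/4) := by
  have hx : (1:ℝ) ≤ (m : ℝ) + 1 := by
    have := Nat.cast_nonneg (α := ℝ) m; linarith
  have h0 : (0:ℝ) ≤ (m : ℝ) + 1 := by positivity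
  have h1 : H (m + 1) ≤ 1 + Real.log ((m : ℝ) + 1) := by
    rw [H_eq_harmonic]
    have := harmonic_le_one_add_log (m + 1)
    push_cast at this ⊢
    convert this using 3
  have h2 : Real.log ((m : ℝ) + 1) ≤ 4 * ((m : ℝ) + 1) ^ ((1:ℝ)/4) := by
    have := Real.log_le_rpow_div h0 (by norm_num : (0:ℝ) < 1/4)
    calc Real.log ((m : ℝ) + 1) ≤ ((m : ℝ) + 1) ^ ((1:ℝ)/4) / (1/4) := this
      _ = 4 * ((m : ℝ) + 1) ^ ((1:ℝ)/4) := by ring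
  have h3 : (1:ℝ) ≤ ((m : ℝ) + 1) ^ ((1:ℝ)/4) :=
    Real.one_le_rpow hx (by norm_num)
  linarith

lemma summable_b : Summable (fun m : ℕ => H (m + 1) ^ 2 * (1 / ((m : ℝ) + 1) ^ 2)) := by
  have hcomp : ∀ m : ℕ, H (m + 1) ^ 2 * (1 / ((m : ℝ) + 1) ^ 2)
      ≤ 25 * ((m : ℝ) + 1) ^ (-(3/2) : ℝ) := by
    intro m
    set x : ℝ := (m : ℝ) + 1 with hxdef
    have hx0 : (0:ℝ) < x := by positivity
    have h1 : H (m + 1) ^ 2 ≤ 25 * x ^ ((1:ℝ)/2) := by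
      have := H_le m
      have hsq : H (m + 1) ^ 2 ≤ (5 * x ^ ((1:ℝ)/4)) ^ 2 := by
        apply pow_le_pow_left₀ (Finset.sum_nonneg fun i _ => by positivity) this
      calc H (m + 1) ^ 2 ≤ (5 * x ^ ((1:ℝ)/4)) ^ 2 := hsq
        _ = 25 * (x ^ ((1:ℝ)/4)) ^ 2 := by ring
        _ = 25 * x ^ ((1:ℝ)/2) := by
            rw [← Real.rpow_natCast (x ^ ((1:ℝ)/4)) 2, ← Real.rpow_mul hx0.le]
            norm_num
    have h2 : (1 / x ^ 2) = x ^ (-(2:ℝ)) := by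
      rw [← Real.rpow_natCast x 2, one_div, ← Real.rpow_neg hx0.le]
      norm_num
    calc H (m + 1) ^ 2 * (1 / x ^ 2) ≤ 25 * x ^ ((1:ℝ)/2) * (1 / x ^ 2) := by
          apply mul_le_mul_of_nonneg_right h1 (by positivity)
      _ = 25 * (x ^ ((1:ℝ)/2) * x ^ (-(2:ℝ))) := by rw [h2]; ring
      _ = 25 * x ^ (-(3/2) : ℝ) := by
          rw [← Real.rpow_add hx0]; norm_num
  have hs : Summable (fun m : ℕ => 25 * ((m : ℝ) + 1) ^ (-(3/2) : ℝ)) := by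
    have h := (Real.summable_one_div_nat_rpow (p := 3/2)).mpr (by norm_num)
    have h2 := (summable_nat_add_iff 1).mpr h
    have h3 : (fun n : ℕ => 1 / ((n + 1 : ℕ) : ℝ) ^ ((3:ℝ)/2)) = fun n : ℕ => ((n : ℝ) + 1) ^ (-(3/2) : ℝ) := by
      funext n
      rw [one_div, ← Real.rpow_neg (by positivity)]
      push_cast
      norm_num
    rw [h3] at h2
    exact h2.mul_left 25
  apply Summable.of_nonneg_of_le _ hcomp hs
  intro m
  positivity

noncomputable def cc (m : ℕ) : ℝ :=
  H (m + 1) * (1 / ((m : ℝ) + 1) ^ 2) - (Z2 - Hgen 2 (m + 1)) * (1 / ((m : ℝ) + 1))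

/-- `∑_n 1/((n+1)(n+m+2)²) = cc m`. -/
lemma L_comb (m : ℕ) :
    HasSum (fun n : ℕ => (1 : ℝ) / (((n : ℝ) + 1) * ((n : ℝ) + m + 2) ^ 2)) (cc m) := by
  have h1 := L_tel m
  have h2 := L_tail (m + 1)
  have h2' : HasSum (fun n : ℕ => (1 : ℝ) / ((n : ℝ) + m + 2) ^ 2) (Z2 - Hgen 2 (m + 1)) := by
    convert h2 using 2 with n
    push_cast; ring_nf
  have h3 := (h1.sub h2').mul_left (1 / ((m : ℝ) + 1))
  have heq : (fun n : ℕ => (1 : ℝ) / (((n : ℝ) + 1) * ((n : ℝ) + m + 2) ^ 2))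
      = fun n : ℕ => (1 / ((m : ℝ) + 1)) *
          ((1 : ℝ) / (((n : ℝ) + 1) * ((n : ℝ) + m + 2)) - (1 : ℝ) / ((n : ℝ) + m + 2) ^ 2) := by
    funext n
    have hn1 : ((n : ℝ) + 1) ≠ 0 := by positivity
    have hn2 : ((n : ℝ) + m + 2) ≠ 0 := by positivity
    have hm1 : ((m : ℝ) + 1) ≠ 0 := by positivity
    field_simp
    ring
  rw [heq, cc]
  convert h3 using 1
  · rfl
  field_simp

lemma cc_nonneg (m : ℕ) : 0 ≤ cc m := by
  have h := (L_comb m)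
  rw [← h.tsum_eq]
  exact tsum_nonneg (fun n => by positivity)

-- ENNReal helpers
open ENNReal in
lemma o_tsum {f : ℕ → ℝ} {r : ℝ} (h0 : ∀ n, 0 ≤ f n) (h : HasSum f r) :
    ∑' n, ENNReal.ofReal (f n) = ENNReal.ofReal r := by
  rw [← ENNReal.ofReal_tsum_of_nonneg h0 h.summable, h.tsum_eq]

lemma tsum_shift (f : ℕ → ℝ≥0∞) (k : ℕ) :
    ∑' n, (if k ≤ n then f n else 0) = ∑' n, f (n + k) := by
  symm
  have hinj : Function.Injective (· + k : ℕ → ℕ) := add_left_injective k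
  have hsupp : Function.support (fun n => if k ≤ n then f n else 0) ⊆ Set.range (· + k) := by
    intro n hn
    simp only [Function.mem_support, ne_eq, ite_eq_right_iff, not_forall] at hn
    rcases hn with ⟨hkn, -⟩
    exact ⟨n - k, by simpa using Nat.sub_add_cancel hkn⟩
  have := Function.Injective.tsum_eq hinj hsupp
  rw [← this]
  apply tsum_congr
  intro n
  simp [Nat.le_add_left]

lemma tsum_cutoff (f : ℕ → ℝ≥0∞) (k : ℕ) :
    ∑' n, (if n < k then f n else 0) = ∑ n ∈ Finset.range k, f n := by
  rw [tsum_eq_sum (s := Finset.range k)]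
  · apply Finset.sum_congr rfl; intro n hn; rw [if_pos (Finset.mem_range.mp hn)]
  · intro n hn; rw [if_neg (by simpa using hn)]

noncomputable def We : ℝ≥0∞ := ∑' i : ℕ, ENNReal.ofReal ((1 / ((i:ℝ) + 1) ^ 2) * (Z2 - Hgen 2 (i + 1)))
noncomputable def W2e : ℝ≥0∞ := ∑' i : ℕ, ENNReal.ofReal ((1 / ((i:ℝ) + 1) ^ 2) * Hgen 2 i)

lemma hq2' : ∑' i : ℕ, ENNReal.ofReal ((1:ℝ) / ((i:ℝ) + 1) ^ 2) = ENNReal.ofReal Z2 :=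
  o_tsum (fun n => by positivity) hq2

lemma pair_split :
    ENNReal.ofReal Z2 * ENNReal.ofReal Z2 = We + W2e + ENNReal.ofReal Z4 ∧ We = W2e := by
  set F : ℕ × ℕ → ℝ≥0∞ :=
    fun p => ENNReal.ofReal ((1 / ((p.1:ℝ) + 1) ^ 2) * (1 / ((p.2:ℝ) + 1) ^ 2)) with hFdef
  have hFval : ∀ a b : ℕ, F (a, b)
      = ENNReal.ofReal ((1 / ((a:ℝ) + 1) ^ 2) * (1 / ((b:ℝ) + 1) ^ 2)) := fun a b => rfl
  -- total
  have htot : ∑' p : ℕ × ℕ, F p = ENNReal.ofReal Z2 * ENNReal.ofReal Z2 := by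
    rw [ENNReal.tsum_prod']
    have hinner : ∀ a : ℕ, ∑' b : ℕ, F (a, b)
        = ENNReal.ofReal ((1:ℝ) / ((a:ℝ) + 1) ^ 2) * ENNReal.ofReal Z2 := by
      intro a
      have : ∀ b : ℕ, F (a, b) = ENNReal.ofReal ((1:ℝ) / ((a:ℝ) + 1) ^ 2)
          * ENNReal.ofReal ((1:ℝ) / ((b:ℝ) + 1) ^ 2) := by
        intro b; rw [hFval, ENNReal.ofReal_mul (by positivity)]
      rw [tsum_congr this, ENNReal.tsum_mul_left, hq2']
    rw [tsum_congr hinner, ENNReal.tsum_mul_right, hq2']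
  -- trichotomy split
  have trich : ∀ p : ℕ × ℕ, F p =
      (if p.1 < p.2 then F p else 0) + (if p.1 = p.2 then F p else 0)
        + (if p.2 < p.1 then F p else 0) := by
    intro p
    rcases lt_trichotomy p.1 p.2 with h | h | h
    · rw [if_pos h, if_neg (by omega), if_neg (by omega), add_zero, add_zero]
    · rw [if_neg (by omega), if_pos h, if_neg (by omega), zero_add, add_zero]
    · rw [if_neg (by omega), if_neg (by omega), if_pos h, zero_add, zero_add]
  have hsplit : ∑' p : ℕ × ℕ, F p =
      (∑' p : ℕ × ℕ, if p.1 < p.2 then F p else 0)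
      + (∑' p : ℕ × ℕ, if p.1 = p.2 then F p else 0)
      + (∑' p : ℕ × ℕ, if p.2 < p.1 then F p else 0) := by
    rw [tsum_congr trich, ENNReal.tsum_add, ENNReal.tsum_add]
  -- upper part = We
  have hupper : (∑' p : ℕ × ℕ, if p.1 < p.2 then F p else 0) = We := by
    rw [ENNReal.tsum_prod']
    apply tsum_congr
    intro a
    have h1 : ∀ b : ℕ, (if (a, b).1 < (a, b).2 then F (a, b) else 0)
        = (if a + 1 ≤ b then F (a, b) else 0) := by
      intro b; simp only [Nat.lt_iff_add_one_le]
    rw [tsum_congr h1, tsum_shift (fun b => F (a, b)) (a + 1)]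
    have h2 : ∀ n : ℕ, F (a, n + (a + 1))
        = ENNReal.ofReal ((1 / ((a:ℝ) + 1) ^ 2) * ((1:ℝ) / (((a:ℝ) + 1) + (n:ℝ) + 1) ^ 2)) := by
      intro n; rw [hFval]; congr 2; push_cast; ring
    rw [tsum_congr h2]
    exact o_tsum (fun n => by positivity)
      ((L_tail (a + 1)).mul_left _ |>.congr_fun (fun n => by push_cast; ring) )
  -- diagonal = Z4
  have hdiag : (∑' p : ℕ × ℕ, if p.1 = p.2 then F p else 0) = ENNReal.ofReal Z4 := by
    rw [ENNReal.tsum_prod']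
    have h1 : ∀ a : ℕ, (∑' b : ℕ, if (a, b).1 = (a, b).2 then F (a, b) else 0)
        = ENNReal.ofReal ((1:ℝ) / ((a:ℝ) + 1) ^ 4) := by
      intro a
      rw [tsum_eq_single a (by intro b hb; simp only; rw [if_neg (fun h => hb h.symm)])]
      rw [if_pos rfl, hFval]
      congr 1
      field_simp
    rw [tsum_congr h1]
    exact o_tsum (fun n => by positivity) hq4
  -- lower part = W2e
  have hlower : (∑' p : ℕ × ℕ, if p.2 < p.1 then F p else 0) = W2e := by
    rw [ENNReal.tsum_prod']
    apply tsum_congr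
    intro a
    rw [tsum_cutoff (fun b => F (a, b)) a]
    have hFv : ∀ b ∈ Finset.range a, F (a, b)
        = ENNReal.ofReal ((1 / ((a:ℝ) + 1) ^ 2) * (1 / ((b:ℝ) + 1) ^ 2)) := fun b _ => hFval a b
    rw [Finset.sum_congr rfl hFv, ← ENNReal.ofReal_sum_of_nonneg (fun b _ => by positivity),
      ← Finset.mul_sum, Hgen2_range]
  -- symmetry: lower = upper
  have hsym : (∑' p : ℕ × ℕ, if p.2 < p.1 then F p else 0)
      = (∑' p : ℕ × ℕ, if p.1 < p.2 then F p else 0) := by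
    rw [← (Equiv.prodComm ℕ ℕ).tsum_eq (fun p : ℕ × ℕ => if p.2 < p.1 then F p else 0)]
    apply tsum_congr
    intro p
    simp only [Equiv.prodComm_apply, Prod.fst_swap, Prod.snd_swap, Prod.swap]
    congr 1
    rw [hFval, hFval, mul_comm]
  constructor
  · rw [← htot, hsplit, hupper, hdiag, hlower]
    ring
  · rw [← hupper, ← hsym, hlower]

lemma We_ne_top : We ≠ ⊤ := by
  have h := pair_split.1
  have : We ≤ ENNReal.ofReal Z2 * ENNReal.ofReal Z2 := by
    rw [h]; exact le_add_right (le_add_right le_rfl)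
  exact ne_top_of_le_ne_top (ENNReal.mul_ne_top ENNReal.ofReal_ne_top ENNReal.ofReal_ne_top) this

lemma We_val : We = ENNReal.ofReal (π ^ 4 / 120) := by
  have h := pair_split.1
  rw [← pair_split.2] at h
  have hpi : (0:ℝ) < π := Real.pi_pos
  have hrw : ENNReal.ofReal Z2 * ENNReal.ofReal Z2 = ENNReal.ofReal (π ^ 4 / 36) := by
    rw [← ENNReal.ofReal_mul (by rw [Z2]; positivity : (0:ℝ) ≤ Z2)]
    congr 1; rw [Z2]; ring
  rw [hrw] at h
  -- h : ofReal (π^4/36) = We + We + ofReal Z4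
  set w := We.toReal with hw
  have hWe : We = ENNReal.ofReal w := (ENNReal.ofReal_toReal We_ne_top).symm
  have hw0 : 0 ≤ w := ENNReal.toReal_nonneg
  rw [hWe, ← ENNReal.ofReal_add hw0 hw0, ← ENNReal.ofReal_add (by linarith) (by rw [Z4]; positivity)] at h
  rw [ENNReal.ofReal_eq_ofReal_iff (by positivity) (by rw [Z4]; positivity)] at h
  rw [hWe]
  congr 1
  rw [Z4] at h
  nlinarith [h]

noncomputable def GEe : ℝ≥0∞ := ∑' m : ℕ, ENNReal.ofReal ((1 / ((m:ℝ) + 1) ^ 2) * Hgen 2 (m + 1))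
noncomputable def BEe : ℝ≥0∞ := ∑' m : ℕ, ENNReal.ofReal (H (m + 1) ^ 2 * (1 / ((m:ℝ) + 1) ^ 2))
noncomputable def EEe : ℝ≥0∞ :=
  ∑' m : ℕ, ENNReal.ofReal (H (m + 1) * (1 / ((m:ℝ) + 1)) * (Z2 - Hgen 2 (m + 1)))
noncomputable def TEe : ℝ≥0∞ :=
  ∑' m : ℕ, ENNReal.ofReal (H m * (1 / ((m:ℝ) + 1)) * (Z2 - Hgen 2 (m + 1)))
noncomputable def CEe : ℝ≥0∞ :=
  ∑' p : ℕ × ℕ, ENNReal.ofReal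
    (H (p.1 + 1) * ((1:ℝ) / (((p.2:ℝ) + 1) * (((p.2):ℝ) + p.1 + 2) ^ 2)))

lemma GE_eq : GEe = W2e + ENNReal.ofReal Z4 := by
  rw [GEe, W2e]
  have hsplit : ∀ m : ℕ, ENNReal.ofReal ((1 / ((m:ℝ) + 1) ^ 2) * Hgen 2 (m + 1))
      = ENNReal.ofReal ((1 / ((m:ℝ) + 1) ^ 2) * Hgen 2 m)
        + ENNReal.ofReal ((1:ℝ) / ((m:ℝ) + 1) ^ 4) := by
    intro m
    rw [← ENNReal.ofReal_add (mul_nonneg (by positivity) (Hgen_nonneg 2 m)) (by positivity)]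
    congr 1
    rw [Hgen_succ]
    field_simp
  rw [tsum_congr hsplit, ENNReal.tsum_add]
  congr 1
  exact o_tsum (fun n => by positivity) hq4

lemma BE_ne_top : BEe ≠ ⊤ := by
  rw [BEe, o_tsum (fun m => by positivity) summable_b.hasSum]
  exact ENNReal.ofReal_ne_top

lemma CE1 : BEe = CEe + EEe := by
  have hCE : CEe = ∑' m : ℕ, ENNReal.ofReal (H (m + 1) * cc m) := by
    rw [CEe, ENNReal.tsum_prod']
    apply tsum_congr
    intro m
    exact o_tsum (fun n => mul_nonneg (H_nonneg _) (by positivity))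
      ((L_comb m).mul_left (H (m + 1)))
  rw [hCE, BEe, EEe]
  rw [← ENNReal.tsum_add]
  apply tsum_congr
  intro m
  rw [← ENNReal.ofReal_add (mul_nonneg (H_nonneg _) (cc_nonneg m))
    (mul_nonneg (mul_nonneg (H_nonneg _) (by positivity)) (tail_nonneg _))]
  congr 1
  rw [cc]
  ring

lemma diff_nonneg (q : ℕ) : 0 ≤ H (q + 2) ^ 2 - Hgen 2 (q + 2) := by
  rw [← L5 q]
  apply Finset.sum_nonneg
  intro m hm
  have hm' : (m:ℝ) ≤ q := by exact_mod_cast Nat.lt_succ_iff.mp (Finset.mem_range.mp hm)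
  have h1 : (0:ℝ) < (q:ℝ) - m + 1 := by linarith
  have h2 : 0 ≤ H (m + 1) := H_nonneg _
  positivity

lemma CE2 : CEe = ∑' q : ℕ,
    ENNReal.ofReal ((H (q + 2) ^ 2 - Hgen 2 (q + 2)) * ((1:ℝ) / ((q:ℝ) + 2) ^ 2)) := by
  set h : ℕ × ℕ → ℝ≥0∞ := fun p =>
    if p.1 ≤ p.2 then ENNReal.ofReal
      (H (p.1 + 1) * ((1:ℝ) / (((((p.2 - p.1 : ℕ)):ℝ) + 1) * (((p.2):ℝ) + 2) ^ 2)))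
    else 0 with hhdef
  have hg : Function.Injective (fun p : ℕ × ℕ => (p.1, p.1 + p.2)) := by
    intro a b hab
    rw [Prod.ext_iff] at hab ⊢
    simp only at hab
    omega
  have hsupp : Function.support h ⊆ Set.range (fun p : ℕ × ℕ => (p.1, p.1 + p.2)) := by
    intro p hp
    rw [Function.mem_support, hhdef] at hp
    simp only at hp
    by_cases hle : p.1 ≤ p.2
    · refine ⟨(p.1, p.2 - p.1), ?_⟩
      simp only
      rw [Prod.ext_iff]
      refine ⟨rfl, ?_⟩
      simp only
      omega
    · exact (hp (if_neg hle)).elim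
  have hcomp : ∀ p : ℕ × ℕ, h (p.1, p.1 + p.2)
      = ENNReal.ofReal (H (p.1 + 1) * ((1:ℝ) / (((p.2:ℝ) + 1) * (((p.2):ℝ) + p.1 + 2) ^ 2))) := by
    intro p
    rw [hhdef]
    simp only [if_pos (Nat.le_add_right p.1 p.2), Nat.add_sub_cancel_left]
    congr 2
    push_cast
    ring
  have step1 : CEe = ∑' p : ℕ × ℕ, h p := by
    rw [CEe, ← Function.Injective.tsum_eq hg hsupp]
    apply tsum_congr
    intro p
    exact (hcomp p).symm
  rw [step1, ENNReal.tsum_prod', ENNReal.tsum_comm]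
  apply tsum_congr
  intro q
  -- inner sum over m with condition m ≤ q
  have hcond : ∀ m : ℕ, h (m, q) = if m < q + 1 then
      ENNReal.ofReal
        (H (m + 1) * ((1:ℝ) / (((((q - m : ℕ)):ℝ) + 1) * (((q):ℝ) + 2) ^ 2))) else 0 := by
    intro m
    rw [hhdef]
    simp only [Nat.lt_succ_iff]
  rw [tsum_congr hcond, tsum_cutoff]
  rw [← ENNReal.ofReal_sum_of_nonneg (fun m hm => mul_nonneg (H_nonneg _) (by positivity))]
  congr 1
  have hterm : ∀ m ∈ Finset.range (q + 1),
      H (m + 1) * ((1:ℝ) / (((((q - m : ℕ)):ℝ) + 1) * (((q):ℝ) + 2) ^ 2))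
        = (H (m + 1) * ((1:ℝ) / ((q:ℝ) - m + 1))) * ((1:ℝ) / ((q:ℝ) + 2) ^ 2) := by
    intro m hm
    have hm' : m ≤ q := Nat.lt_succ_iff.mp (Finset.mem_range.mp hm)
    have hm'' : (m:ℝ) ≤ q := by exact_mod_cast hm'
    have h1 : ((q:ℝ) - m + 1) ≠ 0 := by linarith
    have h2 : ((q:ℝ) + 2) ≠ 0 := by positivity
    rw [Nat.cast_sub hm']
    field_simp
  rw [Finset.sum_congr rfl hterm, ← Finset.sum_mul, L5]

lemma CEe_ne_top : CEe ≠ ⊤ := by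
  intro htop
  apply BE_ne_top
  rw [CE1, htop, top_add]

lemma EE_eq_GE : EEe = GEe := by
  have hBs : BEe = ENNReal.ofReal 1
      + ∑' q : ℕ, ENNReal.ofReal (H (q + 2) ^ 2 * (1 / ((q:ℝ) + 2) ^ 2)) := by
    rw [BEe, tsum_eq_zero_add' ENNReal.summable]
    congr 1
    · congr 1
      rw [show H 1 = 1 by rw [H_succ, H_zero]; norm_num]
      norm_num
    · apply tsum_congr
      intro q
      congr 1
      push_cast
      ring
  have hGs : GEe = ENNReal.ofReal 1
      + ∑' q : ℕ, ENNReal.ofReal ((1 / ((q:ℝ) + 2) ^ 2) * Hgen 2 (q + 2)) := by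
    rw [GEe, tsum_eq_zero_add' ENNReal.summable]
    congr 1
    · congr 1
      rw [show Hgen 2 1 = 1 by rw [Hgen_succ, Hgen_zero]; norm_num]
      norm_num
    · apply tsum_congr
      intro q
      congr 1
      push_cast
      ring
  have h2 : BEe = CEe + GEe := by
    rw [hBs, hGs, CE2]
    rw [← add_assoc, add_comm (∑' q : ℕ,
      ENNReal.ofReal ((H (q + 2) ^ 2 - Hgen 2 (q + 2)) * ((1:ℝ) / ((q:ℝ) + 2) ^ 2)))
      (ENNReal.ofReal 1), add_assoc]
    congr 1
    rw [← ENNReal.tsum_add]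
    apply tsum_congr
    intro q
    rw [← ENNReal.ofReal_add (mul_nonneg (diff_nonneg q) (by positivity))
      (mul_nonneg (by positivity) (Hgen_nonneg 2 (q + 2)))]
    congr 1
    ring
  rw [CE1] at h2
  exact (ENNReal.add_right_inj CEe_ne_top).mp h2

lemma EE_split : EEe = TEe + We := by
  rw [EEe, TEe, We, ← ENNReal.tsum_add]
  apply tsum_congr
  intro m
  rw [← ENNReal.ofReal_add
    (mul_nonneg (mul_nonneg (H_nonneg m) (by positivity)) (tail_nonneg _))
    (mul_nonneg (by positivity) (tail_nonneg _))]
  congr 1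
  rw [H_succ]
  have hm : ((m:ℝ) + 1) ≠ 0 := by positivity
  field_simp

lemma TE_val : TEe = ENNReal.ofReal Z4 := by
  have h1 : We + TEe = We + ENNReal.ofReal Z4 := by
    rw [add_comm We TEe, ← EE_split, EE_eq_GE, GE_eq, ← pair_split.2]
  exact (ENNReal.add_right_inj We_ne_top).mp h1

noncomputable def se (k : ℕ) : ℝ := H (k + 1) ^ 2 * (1 / ((k:ℝ) + 2) ^ 2)

lemma se_nonneg (k : ℕ) : 0 ≤ se k := mul_nonneg (by positivity) (by positivity)

lemma SE_val : ∑' k : ℕ, ENNReal.ofReal (se k) = ENNReal.ofReal (11 * π ^ 4 / 360) := by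
  have hsplit : ∀ k : ℕ, ENNReal.ofReal (se k)
      = ENNReal.ofReal ((1 / ((k:ℝ) + 2) ^ 2) * Hgen 2 (k + 1))
        + ∑ j ∈ Finset.range (k + 1),
            ENNReal.ofReal (2 * (H j * (1 / ((j:ℝ) + 1))) * (1 / ((k:ℝ) + 2) ^ 2)) := by
    intro k
    rw [← ENNReal.ofReal_sum_of_nonneg
      (fun j _ => mul_nonneg (mul_nonneg (by norm_num) (mul_nonneg (H_nonneg j) (by positivity)))
        (by positivity))]
    rw [← ENNReal.ofReal_add (mul_nonneg (by positivity) (Hgen_nonneg 2 (k + 1)))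
      (Finset.sum_nonneg fun j _ =>
        mul_nonneg (mul_nonneg (by norm_num) (mul_nonneg (H_nonneg j) (by positivity)))
          (by positivity))]
    congr 1
    rw [se, L4', add_mul]
    rw [show (2 * ∑ j ∈ Finset.range (k + 1), H j * (1 / ((j:ℝ) + 1))) * (1 / ((k:ℝ) + 2) ^ 2)
        = ∑ j ∈ Finset.range (k + 1), 2 * (H j * (1 / ((j:ℝ) + 1))) * (1 / ((k:ℝ) + 2) ^ 2) by
      rw [Finset.mul_sum, Finset.sum_mul]]
    ring
  rw [tsum_congr hsplit, ENNReal.tsum_add]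
  -- first piece = W2e = We
  have hP1 : (∑' k : ℕ, ENNReal.ofReal ((1 / ((k:ℝ) + 2) ^ 2) * Hgen 2 (k + 1))) = We := by
    symm
    rw [pair_split.2, W2e, tsum_eq_zero_add' ENNReal.summable]
    rw [show ENNReal.ofReal ((1 / (((0:ℕ):ℝ) + 1) ^ 2) * Hgen 2 0) = 0 by
      rw [Hgen_zero]; norm_num]
    rw [zero_add]
    apply tsum_congr
    intro k
    congr 1
    push_cast
    ring
  -- second piece = 2 * Z4
  have hP2 : (∑' k : ℕ, ∑ j ∈ Finset.range (k + 1),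
      ENNReal.ofReal (2 * (H j * (1 / ((j:ℝ) + 1))) * (1 / ((k:ℝ) + 2) ^ 2)))
      = ENNReal.ofReal (2 * Z4) := by
    have h1 : ∀ k : ℕ, (∑ j ∈ Finset.range (k + 1),
        ENNReal.ofReal (2 * (H j * (1 / ((j:ℝ) + 1))) * (1 / ((k:ℝ) + 2) ^ 2)))
        = ∑' j : ℕ, if j < k + 1 then
            ENNReal.ofReal (2 * (H j * (1 / ((j:ℝ) + 1))) * (1 / ((k:ℝ) + 2) ^ 2)) else 0 := by
      intro k
      rw [tsum_cutoff]
    rw [tsum_congr h1, ENNReal.tsum_comm]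
    have h2 : ∀ j : ℕ, (∑' k : ℕ, if j < k + 1 then
        ENNReal.ofReal (2 * (H j * (1 / ((j:ℝ) + 1))) * (1 / ((k:ℝ) + 2) ^ 2)) else 0)
        = ENNReal.ofReal (2 * (H j * (1 / ((j:ℝ) + 1)) * (Z2 - Hgen 2 (j + 1)))) := by
      intro j
      have hc : ∀ k : ℕ, (if j < k + 1 then
          ENNReal.ofReal (2 * (H j * (1 / ((j:ℝ) + 1))) * (1 / ((k:ℝ) + 2) ^ 2)) else 0)
          = (if j ≤ k then
            ENNReal.ofReal (2 * (H j * (1 / ((j:ℝ) + 1))) * (1 / ((k:ℝ) + 2) ^ 2)) else 0) := by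
        intro k; simp only [Nat.lt_succ_iff]
      rw [tsum_congr hc, tsum_shift (fun k =>
        ENNReal.ofReal (2 * (H j * (1 / ((j:ℝ) + 1))) * (1 / ((k:ℝ) + 2) ^ 2))) j]
      have hsum : HasSum (fun n : ℕ =>
          2 * (H j * (1 / ((j:ℝ) + 1))) * (1 / (((n + j : ℕ):ℝ) + 2) ^ 2))
          (2 * (H j * (1 / ((j:ℝ) + 1)) * (Z2 - Hgen 2 (j + 1)))) := by
        have h0 := (L_tail (j + 1)).mul_left (2 * (H j * (1 / ((j:ℝ) + 1))))
        convert h0 using 1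
        · rfl
        · funext n
          push_cast
          ring
        · ring
      exact o_tsum (fun n => mul_nonneg
        (mul_nonneg (by norm_num) (mul_nonneg (H_nonneg j) (by positivity))) (by positivity)) hsum
    rw [tsum_congr h2]
    have h3 : ∀ j : ℕ, ENNReal.ofReal (2 * (H j * (1 / ((j:ℝ) + 1)) * (Z2 - Hgen 2 (j + 1))))
        = ENNReal.ofReal 2 * ENNReal.ofReal (H j * (1 / ((j:ℝ) + 1)) * (Z2 - Hgen 2 (j + 1))) := by
      intro j
      rw [← ENNReal.ofReal_mul (by norm_num)]
    rw [tsum_congr h3, ENNReal.tsum_mul_left, ← TEe, TE_val, ← ENNReal.ofReal_mul (by norm_num)]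
  rw [hP1, hP2, We_val, ← ENNReal.ofReal_add (by positivity) (by rw [Z4]; positivity)]
  congr 1
  rw [Z4]
  ring

lemma hasSum_se : HasSum se (11 * π ^ 4 / 360) := by
  have hne : (∑' k : ℕ, ENNReal.ofReal (se k)) ≠ ⊤ := by
    rw [SE_val]; exact ENNReal.ofReal_ne_top
  have hsumm : Summable se := by
    have h := ENNReal.summable_toReal hne
    have heq : (fun k : ℕ => (ENNReal.ofReal (se k)).toReal) = se := by
      funext k; exact ENNReal.toReal_ofReal (se_nonneg k)
    rwa [heq] at h
  have htsum : ∑' k : ℕ, se k = 11 * π ^ 4 / 360 := by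
    have h1 := ENNReal.ofReal_tsum_of_nonneg se_nonneg hsumm
    rw [SE_val] at h1
    have h2 := (ENNReal.ofReal_eq_ofReal_iff (tsum_nonneg se_nonneg) (by positivity)).mp h1
    exact h2
  exact htsum ▸ hsumm.hasSum

theorem euler_sum_11 :
    HasSum (fun k : ℕ => (H (k+1) : ℂ) ^ 2 / ((k : ℂ) + 2) ^ 2) (11 * riemannZeta 4 / 4) := by
  have h := Complex.hasSum_ofReal.mpr hasSum_se
  have hfun : (fun k : ℕ => ((se k : ℝ) : ℂ))
      = fun k : ℕ => (H (k+1) : ℂ) ^ 2 / ((k : ℂ) + 2) ^ 2 := by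
    funext k
    rw [se]
    push_cast
    have hk : ((k : ℂ) + 2) ≠ 0 := by
      intro hc
      have : ((k : ℂ) + 2).re = 0 := by rw [hc]; rfl
      simp [Complex.add_re] at this
      linarith [Nat.cast_nonneg (α := ℝ) k]
    field_simp
  have hval : ((11 * π ^ 4 / 360 : ℝ) : ℂ) = 11 * riemannZeta 4 / 4 := by
    rw [riemannZeta_four]
    push_cast
    ring
  rw [hfun, hval] at h
  exact h
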